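/- For any permutation σ of {1,...,n+1} and any i ∈ {1,...,n+1}: inv_i(σ) - inv_{σ(i)}(σ⁻¹) = σ(i) - i, where inv_i(σ) = |{j : i < j and σ(i) > σ(j)}|. -/

import Mathlib

/-- `inv_i(σ) = |{j : i < j and σ(i) > σ(j)}|`. -/
def invAt {m : ℕ} (σ : Equiv.Perm (Fin m)) (i : Fin m) : ℕ :=
  (Finset.univ.filter (fun j : Fin m => i < j ∧ σ j < σ i)).card

/-- `inv_i(σ) - inv_{σ(i)}(σ⁻¹) = σ(i) - i` for every permutation `σ` and index `i`. -/
theorem stmt_6 (n : ℕ) (σ : Equiv.Perm (Fin (n + 1))) (i : Fin (n + 1)) :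
    (invAt σ i : ℤ) - (invAt σ⁻¹ (σ i) : ℤ) = ((σ i : ℕ) : ℤ) - ((i : ℕ) : ℤ) := by
  classical
  set A := Finset.univ.filter (fun j : Fin (n+1) => i < j ∧ σ j < σ i) with hA
  set B := Finset.univ.filter (fun j : Fin (n+1) => i < j ∧ σ i < σ j) with hB
  set C := Finset.univ.filter (fun j : Fin (n+1) => j < i ∧ σ i < σ j) with hC
  have hinv : invAt σ⁻¹ (σ i) = C.card := by
    unfold invAt
    apply Finset.card_nbij' (fun k => σ⁻¹ k) (fun j => σ j)
    · intro k hk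
      simp only [Finset.mem_coe, Finset.mem_filter, Finset.mem_univ, true_and,
        Equiv.Perm.inv_def, Equiv.symm_apply_apply] at hk
      simp only [hC, Finset.mem_coe, Finset.mem_filter, Finset.mem_univ, true_and]
      exact ⟨hk.2, by simpa using hk.1⟩
    · intro j hj
      simp only [hC, Finset.mem_coe, Finset.mem_filter, Finset.mem_univ, true_and] at hj
      simp only [Finset.mem_coe, Finset.mem_filter, Finset.mem_univ, true_and, Equiv.Perm.inv_def, Equiv.symm_apply_apply]
      exact ⟨hj.2, hj.1⟩
    · intro k _; simp
    · intro j _; simp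
  have hAB : A ∪ B = Finset.univ.filter (fun j => i < j) := by
    ext j
    simp only [hA, hB, Finset.mem_union, Finset.mem_filter, Finset.mem_univ, true_and]
    constructor
    · rintro (⟨h, _⟩ | ⟨h, _⟩) <;> exact h
    · intro h
      have : σ j ≠ σ i := fun he => (ne_of_gt h) (σ.injective he)
      rcases this.lt_or_gt with h' | h'
      · exact Or.inl ⟨h, h'⟩
      · exact Or.inr ⟨h, h'⟩
  have hdAB : Disjoint A B := by
    rw [Finset.disjoint_left]
    intro j hj hj'
    simp only [hA, hB, Finset.mem_filter] at hj hj'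
    exact absurd hj'.2.2 (lt_asymm hj.2.2)
  have hBC : B ∪ C = Finset.univ.filter (fun j => σ i < σ j) := by
    ext j
    simp only [hB, hC, Finset.mem_union, Finset.mem_filter, Finset.mem_univ, true_and]
    constructor
    · rintro (⟨_, h⟩ | ⟨_, h⟩) <;> exact h
    · intro h
      have : j ≠ i := fun he => absurd (he ▸ h) (lt_irrefl _)
      rcases this.lt_or_gt with h' | h'
      · exact Or.inr ⟨h', h⟩
      · exact Or.inl ⟨h', h⟩
  have hdBC : Disjoint B C := by
    rw [Finset.disjoint_left]
    intro j hj hj'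
    simp only [hB, hC, Finset.mem_filter] at hj hj'
    exact absurd hj'.2.1 (lt_asymm hj.2.1)
  have hIoi : ∀ a : Fin (n+1), (Finset.univ.filter (fun j => a < j)).card = n - a := by
    intro a
    have : Finset.univ.filter (fun j => a < j) = Finset.Ioi a := by
      ext j; simp
    rw [this, Fin.card_Ioi]
    simp
  have h1 : A.card + B.card = n - (i : ℕ) := by
    rw [← Finset.card_union_of_disjoint hdAB, hAB, hIoi]
  have h2 : B.card + C.card = n - ((σ i : ℕ)) := by
    rw [← Finset.card_union_of_disjoint hdBC, hBC]
    rw [show (Finset.univ.filter (fun j => σ i < σ j)).card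
        = (Finset.univ.filter (fun k => σ i < k)).card from ?_, hIoi]
    apply Finset.card_nbij' (fun j => σ j) (fun k => σ⁻¹ k)
    · intro j hj; simp only [Finset.mem_coe, Finset.mem_filter, Finset.mem_univ, true_and] at hj ⊢; exact hj
    · intro k hk; simp only [Finset.mem_coe, Finset.mem_filter, Finset.mem_univ, true_and,
        Equiv.Perm.inv_def, Equiv.apply_symm_apply] at hk ⊢; exact hk
    · intro j _; simp
    · intro k _; simp
  have hle1 : (i : ℕ) ≤ n := Fin.is_le i
  have hle2 : ((σ i : ℕ)) ≤ n := Fin.is_le (σ i)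
  have hA' : invAt σ i = A.card := rfl
  rw [hA', hinv]
  omega
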